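/- (Compactness criterion in L^p) Let (X,d,μ) be a metric measure space with μ(X)=1 and let F ⊂ L^p(X,μ) be a family such that (a) ‖f‖_∞ ≤ M for all f ∈ F, and (b) for every σ > 0 there exist a set N^σ, a modulus of continuity ω_σ and β_σ ≥ 0 with |f(x)-f(x')| ≤ ω_σ(d(x,x')) + β_σ for all x,x' ∉ N^σ and all f ∈ F, where μ(N^σ) + β_σ → 0 as σ → 0. Then F is precompact in L^p(X,μ) for every 1 ≤ p < ∞. -/

import Mathlib

open MeasureTheory Real Filter

noncomputable section

theorem lp_compactness_criterion
    {X : Type*} [MetricSpace X] [TopologicalSpace.SeparableSpace X]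
    [MeasurableSpace X] [BorelSpace X]
    (μ : Measure X) [IsProbabilityMeasure μ]
    (p : ENNReal) (hp : 1 ≤ p) (hp' : p ≠ ⊤)
    (F : Set (X → ℝ)) (hFmeas : ∀ f ∈ F, Measurable f)
    (M : ℝ) (hFbd : ∀ f ∈ F, ∀ x, |f x| ≤ M)
    (N : ℝ → Set X) (ω : ℝ → ℝ → ℝ) (β : ℝ → ℝ)
    (hβ : ∀ σ > (0:ℝ), 0 ≤ β σ)
    (hωmono : ∀ σ > (0:ℝ), ∀ s t : ℝ, s ≤ t → ω σ s ≤ ω σ t)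
    (hωnonneg : ∀ σ > (0:ℝ), ∀ t, 0 ≤ ω σ t)
    (hωlim : ∀ σ > (0:ℝ), Tendsto (ω σ) (nhdsWithin 0 (Set.Ici 0)) (nhds 0))
    (hosc : ∀ σ > (0:ℝ), ∀ f ∈ F, ∀ x ∉ N σ, ∀ x' ∉ N σ,
      |f x - f x'| ≤ ω σ (dist x x') + β σ)
    (hsmall : Tendsto (fun σ => (μ (N σ)).toReal + β σ)
      (nhdsWithin 0 (Set.Ioi 0)) (nhds 0)) :
    ∀ f : ℕ → X → ℝ, (∀ n, f n ∈ F) →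
      ∃ (φ : ℕ → ℕ) (g : X → ℝ), StrictMono φ ∧
        Tendsto (fun n => eLpNorm (fun x => f (φ n) x - g x) p μ) atTop (nhds 0) := by
  intro f hf
  haveI : SecondCountableTopology X :=
    UniformSpace.secondCountable_of_separable X
  -- Step 1: choose σ k
  have hσex : ∀ k : ℕ, ∃ σ > (0:ℝ), (μ (N σ)).toReal + β σ < (2:ℝ)⁻¹ ^ k := by
    intro k
    have h1 : ∀ᶠ σ in nhdsWithin (0:ℝ) (Set.Ioi 0),
        (μ (N σ)).toReal + β σ < (2:ℝ)⁻¹ ^ k ∧ σ ∈ Set.Ioi (0:ℝ) :=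
      (hsmall.eventually (gt_mem_nhds (by positivity))).and self_mem_nhdsWithin
    obtain ⟨σ, h2, h3⟩ := h1.exists
    exact ⟨σ, h3, h2⟩
  choose σ hσpos hσ using hσex
  have hβk : ∀ k, β (σ k) ≤ (2:ℝ)⁻¹ ^ k := fun k =>
    le_of_lt (lt_of_le_of_lt (le_add_of_nonneg_left ENNReal.toReal_nonneg) (hσ k))
  have hμk : ∀ k, μ (N (σ k)) ≤ ENNReal.ofReal ((2:ℝ)⁻¹ ^ k) := by
    intro k
    have h1 : (μ (N (σ k))).toReal ≤ (2:ℝ)⁻¹ ^ k :=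
      le_of_lt (lt_of_le_of_lt (le_add_of_nonneg_right (hβ _ (hσpos k))) (hσ k))
    rw [← ENNReal.ofReal_toReal (measure_ne_top μ _)]
    exact ENNReal.ofReal_le_ofReal h1
  -- Borel-Cantelli
  have hNull : μ (limsup (fun k => N (σ k)) atTop) = 0 := by
    apply measure_limsup_atTop_eq_zero
    have h1 : ∑' k, μ (N (σ k)) ≤ ∑' k : ℕ, ENNReal.ofReal ((2:ℝ)⁻¹ ^ k) :=
      ENNReal.tsum_le_tsum hμk
    have h2 : ∑' k : ℕ, ENNReal.ofReal ((2:ℝ)⁻¹ ^ k)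
        = ENNReal.ofReal (∑' k : ℕ, (2:ℝ)⁻¹ ^ k) := by
      rw [ENNReal.ofReal_tsum_of_nonneg (fun k => by positivity)]
      exact summable_geometric_of_lt_one (by norm_num) (by norm_num)
    exact ne_top_of_le_ne_top (by rw [h2]; exact ENNReal.ofReal_ne_top) h1
  -- Step 2: countable dense subsets
  have hDex : ∀ k : ℕ, ∃ D : Set ↥((N (σ k))ᶜ), D.Countable ∧ Dense D :=
    fun k => TopologicalSpace.exists_countable_dense _
  choose D hDc hDd using hDex
  set T : Set X := ⋃ k, (Subtype.val '' (D k)) with hT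
  have hTc : T.Countable := Set.countable_iUnion fun k => (hDc k).image _
  haveI : Countable ↥T := hTc.to_subtype
  -- Step 3: diagonal subsequence
  set v : ℕ → ↥T → ℝ := fun n d => f n d.val with hv
  have hvmem : ∀ n, v n ∈ Set.univ.pi (fun _ : ↥T => Set.Icc (-M) M) := by
    intro n
    rw [Set.mem_univ_pi]
    intro d
    exact abs_le.mp (hFbd _ (hf n) d.val)
  obtain ⟨a, -, φ, hφ, hconv⟩ :=
    (isCompact_univ_pi (fun _ : ↥T => isCompact_Icc)).tendsto_subseq hvmem
  have hptwise : ∀ d : ↥T, Tendsto (fun n => f (φ n) d.val) atTop (nhds (a d)) := by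
    rw [tendsto_pi_nhds] at hconv
    exact hconv
  -- Step 4: a.e. Cauchy
  set L := limsup (fun k => N (σ k)) atTop with hLdef
  have hcauchy : ∀ x ∉ L, CauchySeq (fun n => f (φ n) x) := by
    intro x hx
    rw [Metric.cauchySeq_iff]
    intro ε hε
    -- x eventually outside N (σ k)
    have hev : ∀ᶠ k in atTop, x ∉ N (σ k) := by
      rw [hLdef, mem_limsup_iff_frequently_mem] at hx
      exact not_frequently.mp hx
    have hev2 : ∀ᶠ k : ℕ in atTop, (2:ℝ)⁻¹ ^ k < ε / 6 :=
      (tendsto_pow_atTop_nhds_zero_of_lt_one (by norm_num) (by norm_num)).eventually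
        (gt_mem_nhds (by positivity))
    obtain ⟨k, hxk, hk6⟩ := (hev.and hev2).exists
    have hσk := hσpos k
    -- modulus small near 0
    have hω : ∀ᶠ t in nhdsWithin (0:ℝ) (Set.Ici 0), ω (σ k) t < ε / 6 :=
      (hωlim _ hσk).eventually (gt_mem_nhds (by positivity))
    rw [eventually_nhdsWithin_iff, Metric.eventually_nhds_iff] at hω
    obtain ⟨δ, hδpos, hδ⟩ := hω
    -- find d ∈ D k close to x
    have hxS : x ∈ (N (σ k))ᶜ := hxk
    have hxcl : (⟨x, hxS⟩ : ↥((N (σ k))ᶜ)) ∈ closure (D k) := (hDd k).closure_eq ▸ Set.mem_univ _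
    rw [Metric.mem_closure_iff] at hxcl
    obtain ⟨d, hdD, hdx⟩ := hxcl δ hδpos
    have hdT : d.val ∈ T := Set.mem_iUnion.mpr ⟨k, Set.mem_image_of_mem _ hdD⟩
    have hdist : dist x d.val < δ := by
      rwa [Subtype.dist_eq] at hdx
    -- convergence at d gives a Cauchy tail
    have hdC : CauchySeq (fun n => f (φ n) d.val) := (hptwise ⟨d.val, hdT⟩).cauchySeq
    rw [Metric.cauchySeq_iff] at hdC
    obtain ⟨n₀, hn₀⟩ := hdC (ε / 3) (by positivity)
    refine ⟨n₀, fun m hm n hn => ?_⟩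
    have key : ∀ j : ℕ, |f (φ j) x - f (φ j) d.val| < ε / 3 := by
      intro j
      have h1 := hosc _ hσk _ (hf (φ j)) x hxk d.val d.prop
      have h2 : ω (σ k) (dist x d.val) < ε / 6 := by
        apply hδ
        · rw [Real.dist_eq, sub_zero, abs_of_nonneg dist_nonneg]; exact hdist
        · exact dist_nonneg
      have h3 : β (σ k) < ε / 6 := lt_of_le_of_lt (hβk k) hk6
      calc |f (φ j) x - f (φ j) d.val| ≤ ω (σ k) (dist x d.val) + β (σ k) := h1
        _ < ε / 6 + ε / 6 := by linarith
        _ = ε / 3 := by ring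
    have hmid := hn₀ m hm n hn
    rw [Real.dist_eq] at hmid ⊢
    have e1 := key m
    have e2 := key n
    have : f (φ m) x - f (φ n) x =
        (f (φ m) x - f (φ m) d.val) + (f (φ m) d.val - f (φ n) d.val)
          + (f (φ n) d.val - f (φ n) x) := by ring
    rw [this]
    calc |(f (φ m) x - f (φ m) d.val) + (f (φ m) d.val - f (φ n) d.val)
          + (f (φ n) d.val - f (φ n) x)|
        ≤ |(f (φ m) x - f (φ m) d.val) + (f (φ m) d.val - f (φ n) d.val)|
          + |f (φ n) d.val - f (φ n) x| := abs_add_le _ _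
      _ ≤ |f (φ m) x - f (φ m) d.val| + |f (φ m) d.val - f (φ n) d.val|
          + |f (φ n) d.val - f (φ n) x| := by
            have := abs_add_le (f (φ m) x - f (φ m) d.val) (f (φ m) d.val - f (φ n) d.val)
            linarith
      _ < ε / 3 + ε / 3 + ε / 3 := by
            have e3 : |f (φ n) d.val - f (φ n) x| = |f (φ n) x - f (φ n) d.val| := abs_sub_comm _ _
            rw [e3]; linarith
      _ = ε := by ring
  -- Step 5: define g
  set g : X → ℝ := fun x => limUnder atTop (fun n => f (φ n) x) with hg
  have haeL : ∀ᵐ x ∂μ, x ∉ L := measure_eq_zero_iff_ae_notMem.mp hNull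
  have htend : ∀ x ∉ L, Tendsto (fun n => f (φ n) x) atTop (nhds (g x)) :=
    fun x hx => (hcauchy x hx).tendsto_limUnder
  have hae : ∀ᵐ x ∂μ, Tendsto (fun n => f (φ n) x) atTop (nhds (g x)) := by
    filter_upwards [haeL] with x hx using htend x hx
  -- measurability/boundedness of g
  have hmeasφ : ∀ n : ℕ, AEStronglyMeasurable (f (φ n)) μ :=
    fun n => (hFmeas _ (hf (φ n))).aestronglyMeasurable
  have hgmeas : AEStronglyMeasurable g μ :=
    aestronglyMeasurable_of_tendsto_ae atTop hmeasφ hae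
  have hgbd : ∀ᵐ x ∂μ, ‖g x‖ ≤ M := by
    filter_upwards [hae] with x hx
    have : Tendsto (fun n => |f (φ n) x|) atTop (nhds |g x|) := hx.abs
    exact le_of_tendsto this (Eventually.of_forall fun n => hFbd _ (hf (φ n)) x)
  have hgmem : MemLp g p μ := MemLp.of_bound hgmeas M hgbd
  -- uniform integrability
  have hui : UnifIntegrable (fun n => f (φ n)) p μ := by
    intro ε hε
    obtain ⟨δ, hδpos, hδ⟩ := unifIntegrable_const (μ := μ) (g := fun _ : X => M) hp hp'
      (memLp_const M) hε
    refine ⟨δ, hδpos, fun i s hs hμs => ?_⟩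
    refine le_trans (eLpNorm_mono fun x => ?_) (hδ (0:ℕ) s hs hμs)
    by_cases hxs : x ∈ s
    · simp only [Set.indicator_of_mem hxs, Real.norm_eq_abs]
      exact le_trans (hFbd _ (hf (φ i)) x) (le_abs_self M)
    · simp [Set.indicator_of_notMem hxs]
  have hfin := tendsto_Lp_finite_of_tendsto_ae (μ := μ) hp hp' hmeasφ hgmem hui hae
  exact ⟨φ, g, hφ, hfin⟩

end
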